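/- arXiv:2604.22504 — 2 statements merged into one kernel-verified Lean document; each statement's English description precedes it below -/
import Mathlib

section
/- Let a finite set of 2n items consist of n positives and n negatives, all with distinct scores, arranged in some linear order by score. Suppose exactly i of the positives occupy positions among the top n of these 2n items. Then the number of concordant (positive ranked above negative) pairs is at most i(2n−i), with equality attained by the arrangement where the first n positions are i positives followed by n−i negatives and the last n positions are n−i positives followed by i negatives. -/
open Finset

private lemma gaussN (M : ℕ) : 2 * (∑ k ∈ Finset.range M, k) + M = M * M := by
  induction M with
  | zero => simp
  | succ m ih =>
      rw [Finset.sum_range_succ]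
      calc 2 * ((∑ k ∈ Finset.range m, k) + m) + (m + 1)
          = (2 * (∑ k ∈ Finset.range m, k) + m) + (2 * m + 1) := by ring
        _ = m * m + (2 * m + 1) := by rw [ih]
        _ = (m + 1) * (m + 1) := by ring

private lemma aux_pairs (m : ℕ) (p q : ℕ → Prop) [DecidablePred p] [DecidablePred q] :
    (((Finset.range m) ×ˢ (Finset.range m)).filter fun z => p z.1 ∧ q z.2 ∧ z.1 < z.2).card
      = ∑ a ∈ (Finset.range m).filter p,
          ((Finset.range m).filter fun b => q b ∧ a < b).card := by
  rw [Finset.card_filter, Finset.sum_product, Finset.sum_filter]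
  refine Finset.sum_congr rfl fun a _ => ?_
  by_cases hp : p a
  · rw [if_pos hp, Finset.card_filter]
    refine Finset.sum_congr rfl fun b _ => ?_
    simp only [hp, true_and]
  · rw [if_neg hp]
    refine Finset.sum_eq_zero fun b _ => ?_
    simp only [hp, false_and, if_false]

private lemma fin_pairs_card (m : ℕ) (P Q : Fin m → Prop) (P' Q' : ℕ → Prop)
    [DecidablePred P] [DecidablePred Q] [DecidablePred P'] [DecidablePred Q']
    (hP : ∀ a : Fin m, P a ↔ P' a.val) (hQ : ∀ a : Fin m, Q a ↔ Q' a.val) :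
    (Finset.univ.filter fun z : Fin m × Fin m => P z.1 ∧ Q z.2 ∧ z.1 < z.2).card
      = ∑ a ∈ (Finset.range m).filter P',
          ((Finset.range m).filter fun b => Q' b ∧ a < b).card := by
  rw [← aux_pairs m P' Q']
  apply Finset.card_bij (fun z _ => ((z.1 : ℕ), (z.2 : ℕ)))
  · intro z hz
    simp only [Finset.mem_filter, Finset.mem_univ, true_and] at hz
    simp only [Finset.mem_filter, Finset.mem_product, Finset.mem_range]
    exact ⟨⟨z.1.isLt, z.2.isLt⟩, (hP z.1).mp hz.1, (hQ z.2).mp hz.2.1, hz.2.2⟩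
  · intro z hz w hw h
    simp only [Prod.mk.injEq] at h
    exact Prod.ext (Fin.val_injective h.1) (Fin.val_injective h.2)
  · intro z hz
    simp only [Finset.mem_filter, Finset.mem_product, Finset.mem_range] at hz
    refine ⟨(⟨z.1, hz.1.1⟩, ⟨z.2, hz.1.2⟩), ?_, rfl⟩
    simp only [Finset.mem_filter, Finset.mem_univ, true_and]
    exact ⟨(hP _).mpr hz.2.1, (hQ _).mpr hz.2.2.1, hz.2.2.2⟩

private lemma fin_filter_card (m : ℕ) (P : Fin m → Prop) (P' : ℕ → Prop)
    [DecidablePred P] [DecidablePred P'] (h : ∀ a : Fin m, P a ↔ P' a.val) :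
    (Finset.univ.filter P).card = ((Finset.range m).filter P').card := by
  apply Finset.card_bij (fun (a : Fin m) (_ : a ∈ Finset.univ.filter P) => (a : ℕ))
  · intro a ha
    simp only [Finset.mem_filter, Finset.mem_univ, true_and] at ha
    exact Finset.mem_filter.mpr ⟨Finset.mem_range.mpr a.isLt, (h a).mp ha⟩
  · intro a _ b _ hab; exact Fin.val_injective hab
  · intro b hb
    simp only [Finset.mem_filter, Finset.mem_range] at hb
    refine ⟨⟨b, hb.1⟩, ?_, rfl⟩
    simp only [Finset.mem_filter, Finset.mem_univ, true_and]
    exact (h _).mpr hb.2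

private lemma sum_rank {s : Finset ℕ} {r : ℕ → ℕ} (hinj : Set.InjOn r ↑s)
    (hlt : ∀ a ∈ s, r a < s.card) (f : ℕ → ℕ) :
    ∑ a ∈ s, f (r a) = ∑ k ∈ Finset.range s.card, f k := by
  have himg : s.image r = Finset.range s.card := by
    apply Finset.eq_of_subset_of_card_le
    · intro b hb
      obtain ⟨a, ha, rfl⟩ := Finset.mem_image.mp hb
      exact Finset.mem_range.mpr (hlt a ha)
    · rw [Finset.card_range, Finset.card_image_of_injOn hinj]
  rw [← himg, Finset.sum_image (fun a ha b hb hab => hinj ha hb hab)]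
private lemma below_lt {s : Finset ℕ} {a b : ℕ} (ha : a ∈ s) (hab : a < b) :
    (s.filter (· < a)).card < (s.filter (· < b)).card := by
  apply Finset.card_lt_card
  rw [Finset.ssubset_iff_of_subset
    (Finset.monotone_filter_right s (fun x _ hx => lt_trans hx hab))]
  exact ⟨a, Finset.mem_filter.mpr ⟨ha, hab⟩, fun hx => by
    simp only [Finset.mem_filter] at hx; exact lt_irrefl a hx.2⟩

private lemma above_lt {s : Finset ℕ} {a b : ℕ} (hb : b ∈ s) (hab : a < b) :
    (s.filter (b < ·)).card < (s.filter (a < ·)).card := by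
  apply Finset.card_lt_card
  rw [Finset.ssubset_iff_of_subset
    (Finset.monotone_filter_right s (fun x _ hx => lt_trans hab hx))]
  exact ⟨b, Finset.mem_filter.mpr ⟨hb, hab⟩, fun hx => by
    simp only [Finset.mem_filter] at hx; exact lt_irrefl b hx.2⟩

private lemma injOn_below (s : Finset ℕ) :
    Set.InjOn (fun a => (s.filter (· < a)).card) ↑s := by
  intro a ha b hb h
  by_contra hne
  rcases lt_or_gt_of_ne hne with h1 | h1
  · exact absurd h (ne_of_lt (below_lt ha h1))
  · exact absurd h.symm (ne_of_lt (below_lt hb h1))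

private lemma injOn_above (s : Finset ℕ) :
    Set.InjOn (fun a => (s.filter (a < ·)).card) ↑s := by
  intro a ha b hb h
  by_contra hne
  rcases lt_or_gt_of_ne hne with h1 | h1
  · exact absurd h.symm (ne_of_lt (above_lt hb h1))
  · exact absurd h (ne_of_lt (above_lt ha h1))

private lemma below_lt_card {s : Finset ℕ} {a : ℕ} (ha : a ∈ s) :
    (s.filter (· < a)).card < s.card := by
  apply Finset.card_lt_card
  rw [Finset.ssubset_iff_of_subset (Finset.filter_subset _ _)]
  exact ⟨a, ha, fun hx => by
    simp only [Finset.mem_filter] at hx; exact lt_irrefl a hx.2⟩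

private lemma above_lt_card {s : Finset ℕ} {a : ℕ} (ha : a ∈ s) :
    (s.filter (a < ·)).card < s.card := by
  apply Finset.card_lt_card
  rw [Finset.ssubset_iff_of_subset (Finset.filter_subset _ _)]
  exact ⟨a, ha, fun hx => by
    simp only [Finset.mem_filter] at hx; exact lt_irrefl a hx.2⟩

private lemma numeric (n i : ℕ) (hn : 1 ≤ n) (hi : i ≤ n) :
    (∑ k ∈ Finset.range i, (2*n - (k+1)))
      + (∑ k ∈ Finset.range (n-i), (2*n - (n+k+1)))
      ≤ i * (2*n - i) + ∑ k ∈ Finset.range n, k := by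
  obtain ⟨j, hj⟩ : ∃ j, n = i + j := ⟨n - i, by omega⟩
  subst hj
  rw [show i + j - i = j from by omega, show 2*(i+j) - i = i + 2*j from by omega]
  have E1 : (∑ k ∈ Finset.range i, (2*(i+j) - (k+1)))
      + ((∑ k ∈ Finset.range i, k) + i) = i * (2*(i+j)) := by
    have : (∑ k ∈ Finset.range i, k) + i = ∑ k ∈ Finset.range i, (k+1) := by
      rw [Finset.sum_add_distrib, Finset.sum_const, Finset.card_range, smul_eq_mul, mul_one]
    rw [this, ← Finset.sum_add_distrib]
    rw [Finset.sum_congr rfl (fun k hk => Nat.sub_add_cancel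
      (by have := Finset.mem_range.mp hk; omega))]
    rw [Finset.sum_const, Finset.card_range, smul_eq_mul]
  have E2 : (∑ k ∈ Finset.range j, (2*(i+j) - ((i+j)+k+1)))
      + ((∑ k ∈ Finset.range j, k) + j*(i+j) + j) = j * (2*(i+j)) := by
    have h2 : (∑ k ∈ Finset.range j, k) + j*(i+j) + j
        = ∑ k ∈ Finset.range j, ((i+j)+k+1) := by
      rw [Finset.sum_add_distrib, Finset.sum_add_distrib, Finset.sum_const,
        Finset.sum_const, Finset.card_range, smul_eq_mul, smul_eq_mul, mul_one]
      ring
    rw [h2, ← Finset.sum_add_distrib]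
    rw [Finset.sum_congr rfl (fun k hk => Nat.sub_add_cancel
      (by have := Finset.mem_range.mp hk; omega))]
    rw [Finset.sum_const, Finset.card_range, smul_eq_mul]
  have G1 := gaussN i
  have G2 := gaussN j
  have G3 := gaussN (i + j)
  nlinarith [E1, E2, G1, G2, G3]
private lemma part1_nat (n i : ℕ) (hn : 1 ≤ n) (hi : i ≤ n) (p : ℕ → Bool)
    (hS : ((Finset.range (2*n)).filter fun a => p a = true).card = n)
    (hA : ((Finset.range (2*n)).filter fun a => p a = true ∧ a < n).card = i) :
    (∑ a ∈ (Finset.range (2*n)).filter (fun a => p a = true),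
        ((Finset.range (2*n)).filter fun b => p b = false ∧ a < b).card)
      ≤ i * (2*n - i) := by
  have hAeq : (((Finset.range (2*n)).filter fun a => p a = true).filter (· < n))
      = (Finset.range (2*n)).filter fun a => p a = true ∧ a < n := by
    rw [Finset.filter_filter]
  have hcardA : (((Finset.range (2*n)).filter fun a => p a = true).filter (· < n)).card = i := by
    rw [hAeq, hA]
  have hcardB : (((Finset.range (2*n)).filter fun a => p a = true).filter
      (fun a => ¬ a < n)).card = n - i := by
    have := Finset.card_filter_add_card_filter_not
      (s := (Finset.range (2*n)).filter fun a => p a = true) (p := (· < n))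
    rw [hS, hcardA] at this
    omega
  have key1 : ∀ a ∈ (Finset.range (2*n)).filter (fun a => p a = true),
      ((Finset.range (2*n)).filter fun b => p b = false ∧ a < b).card
        + (((Finset.range (2*n)).filter fun x => p x = true).filter (a < ·)).card
        = 2*n - (a+1) := by
    intro a ha
    have ht : (Finset.range (2*n)).filter (fun b => a < b) = Finset.Ico (a+1) (2*n) := by
      ext b
      simp only [Finset.mem_filter, Finset.mem_range, Finset.mem_Ico]
      omega
    have hpart := Finset.card_filter_add_card_filter_not
      (s := (Finset.range (2*n)).filter (fun b => a < b)) (p := fun b => p b = true)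
    have e1 : ((Finset.range (2*n)).filter (fun b => a < b)).filter (fun b => p b = true)
        = ((Finset.range (2*n)).filter fun x => p x = true).filter (a < ·) := by
      rw [Finset.filter_filter, Finset.filter_filter]
      exact Finset.filter_congr fun b _ => by tauto
    have e2 : ((Finset.range (2*n)).filter (fun b => a < b)).filter (fun b => ¬ p b = true)
        = (Finset.range (2*n)).filter fun b => p b = false ∧ a < b := by
      rw [Finset.filter_filter]
      refine Finset.filter_congr fun b _ => ?_
      simp only [Bool.not_eq_true]
      tauto
    rw [e1, e2, ht, Nat.card_Ico] at hpart
    omega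
  have sum_split :
      (∑ a ∈ (Finset.range (2*n)).filter (fun a => p a = true),
          ((Finset.range (2*n)).filter fun b => p b = false ∧ a < b).card)
        + (∑ a ∈ (Finset.range (2*n)).filter (fun a => p a = true),
            (((Finset.range (2*n)).filter fun x => p x = true).filter (a < ·)).card)
        = ∑ a ∈ (Finset.range (2*n)).filter (fun a => p a = true), (2*n - (a+1)) := by
    rw [← Finset.sum_add_distrib]
    exact Finset.sum_congr rfl key1
  have sumg : (∑ a ∈ (Finset.range (2*n)).filter (fun a => p a = true),
      (((Finset.range (2*n)).filter fun x => p x = true).filter (a < ·)).card)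
      = ∑ k ∈ Finset.range n, k := by
    have h := sum_rank (s := (Finset.range (2*n)).filter (fun a => p a = true))
      (r := fun a => (((Finset.range (2*n)).filter fun x => p x = true).filter (a < ·)).card)
      (injOn_above _) (fun a ha => above_lt_card ha) id
    simp only [id] at h
    rw [h, hS]
  have hsplitS : (∑ a ∈ (Finset.range (2*n)).filter (fun a => p a = true), (2*n - (a+1)))
      = (∑ a ∈ ((Finset.range (2*n)).filter fun x => p x = true).filter (· < n), (2*n - (a+1)))
      + (∑ a ∈ ((Finset.range (2*n)).filter fun x => p x = true).filter (fun a => ¬ a < n),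
          (2*n - (a+1))) :=
    (Finset.sum_filter_add_sum_filter_not _ _ _).symm
  have boundA : (∑ a ∈ ((Finset.range (2*n)).filter fun x => p x = true).filter (· < n),
      (2*n - (a+1))) ≤ ∑ k ∈ Finset.range i, (2*n - (k+1)) := by
    have step : ∀ a ∈ ((Finset.range (2*n)).filter fun x => p x = true).filter (· < n),
        2*n - (a+1) ≤ 2*n - (((((Finset.range (2*n)).filter fun x => p x = true).filter
          (· < n)).filter (· < a)).card + 1) := by
      intro a ha
      have hra : ((((Finset.range (2*n)).filter fun x => p x = true).filter (· < n)).filter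
          (· < a)).card ≤ a := by
        have hsub : (((Finset.range (2*n)).filter fun x => p x = true).filter (· < n)).filter
            (· < a) ⊆ Finset.range a :=
          fun x hx => Finset.mem_range.mpr (Finset.mem_filter.mp hx).2
        have := Finset.card_le_card hsub
        rwa [Finset.card_range] at this
      omega
    have h2 := Finset.sum_le_sum step
    have h3 := sum_rank (s := ((Finset.range (2*n)).filter fun x => p x = true).filter (· < n))
      (r := fun a => ((((Finset.range (2*n)).filter fun x => p x = true).filter (· < n)).filter
          (· < a)).card)
      (injOn_below _) (fun a ha => below_lt_card ha) (fun k => 2*n - (k+1))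
    rw [hcardA] at h3
    calc _ ≤ _ := h2
      _ = _ := h3
  have boundB : (∑ a ∈ ((Finset.range (2*n)).filter fun x => p x = true).filter
      (fun a => ¬ a < n), (2*n - (a+1))) ≤ ∑ k ∈ Finset.range (n-i), (2*n - (n+k+1)) := by
    have hBn : ∀ a ∈ ((Finset.range (2*n)).filter fun x => p x = true).filter
        (fun a => ¬ a < n), n ≤ a := by
      intro a ha
      have := (Finset.mem_filter.mp ha).2
      omega
    have step : ∀ a ∈ ((Finset.range (2*n)).filter fun x => p x = true).filter
        (fun a => ¬ a < n),
        2*n - (a+1) ≤ 2*n - (n + ((((Finset.range (2*n)).filter fun x => p x = true).filter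
          (fun a => ¬ a < n)).filter (· < a)).card + 1) := by
      intro a ha
      have h1 : ((((Finset.range (2*n)).filter fun x => p x = true).filter
          (fun a => ¬ a < n)).filter (· < a)).card ≤ a - n := by
        have hsub : (((Finset.range (2*n)).filter fun x => p x = true).filter
            (fun a => ¬ a < n)).filter (· < a) ⊆ Finset.Ico n a := by
          intro x hx
          have hx' := Finset.mem_filter.mp hx
          exact Finset.mem_Ico.mpr ⟨hBn x hx'.1, hx'.2⟩
        have := Finset.card_le_card hsub
        rwa [Nat.card_Ico] at this
      have h2 := hBn a ha
      omega
    have h2 := Finset.sum_le_sum step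
    have h3 := sum_rank (s := ((Finset.range (2*n)).filter fun x => p x = true).filter
        (fun a => ¬ a < n))
      (r := fun a => ((((Finset.range (2*n)).filter fun x => p x = true).filter
          (fun a => ¬ a < n)).filter (· < a)).card)
      (injOn_below _) (fun a ha => below_lt_card ha) (fun k => 2*n - (n+k+1))
    rw [hcardB] at h3
    calc _ ≤ _ := h2
      _ = _ := h3
  have hnum := numeric n i hn hi
  linarith [sum_split, sumg, hsplitS, boundA, boundB, hnum]
private lemma part2_nat (n i : ℕ) (hn : 1 ≤ n) (hi : i ≤ n) :
    (∑ a ∈ (Finset.range (2*n)).filter (fun a => a < i ∨ (n ≤ a ∧ a < 2*n - i)),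
      ((Finset.range (2*n)).filter
        fun b => (¬(b < i ∨ (n ≤ b ∧ b < 2*n - i))) ∧ a < b).card)
      = i * (2*n - i) := by
  have hfilter : (Finset.range (2*n)).filter (fun a => a < i ∨ (n ≤ a ∧ a < 2*n - i))
      = Finset.Ico 0 i ∪ Finset.Ico n (2*n - i) := by
    ext a
    simp only [Finset.mem_filter, Finset.mem_range, Finset.mem_union, Finset.mem_Ico]
    omega
  rw [hfilter]
  have hdisj : Disjoint (Finset.Ico 0 i) (Finset.Ico n (2*n - i)) := by
    rw [Finset.disjoint_left]
    intro a ha hb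
    have h1 := Finset.mem_Ico.mp ha
    have h2 := Finset.mem_Ico.mp hb
    omega
  rw [Finset.sum_union hdisj]
  have h1 : ∀ a ∈ Finset.Ico 0 i,
      ((Finset.range (2*n)).filter
        fun b => (¬(b < i ∨ (n ≤ b ∧ b < 2*n - i))) ∧ a < b).card = n := by
    intro a ha
    have ha' : a < i := (Finset.mem_Ico.mp ha).2
    have hset : (Finset.range (2*n)).filter
        (fun b => (¬(b < i ∨ (n ≤ b ∧ b < 2*n - i))) ∧ a < b)
        = Finset.Ico i n ∪ Finset.Ico (2*n - i) (2*n) := by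
      ext b
      simp only [Finset.mem_filter, Finset.mem_range, Finset.mem_union, Finset.mem_Ico,
        not_or, not_and, not_lt]
      omega
    have hd : Disjoint (Finset.Ico i n) (Finset.Ico (2*n - i) (2*n)) := by
      rw [Finset.disjoint_left]
      intro b hb hb'
      have h1 := Finset.mem_Ico.mp hb
      have h2 := Finset.mem_Ico.mp hb'
      omega
    rw [hset, Finset.card_union_of_disjoint hd, Nat.card_Ico, Nat.card_Ico]
    omega
  have h2 : ∀ a ∈ Finset.Ico n (2*n - i),
      ((Finset.range (2*n)).filter
        fun b => (¬(b < i ∨ (n ≤ b ∧ b < 2*n - i))) ∧ a < b).card = i := by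
    intro a ha
    have ha' := Finset.mem_Ico.mp ha
    have hset : (Finset.range (2*n)).filter
        (fun b => (¬(b < i ∨ (n ≤ b ∧ b < 2*n - i))) ∧ a < b)
        = Finset.Ico (2*n - i) (2*n) := by
      ext b
      simp only [Finset.mem_filter, Finset.mem_range, Finset.mem_Ico, not_or, not_and, not_lt]
      omega
    rw [hset, Nat.card_Ico]
    omega
  rw [Finset.sum_congr rfl h1, Finset.sum_congr rfl h2, Finset.sum_const, Finset.sum_const,
    Nat.card_Ico, Nat.card_Ico, smul_eq_mul, smul_eq_mul]
  obtain ⟨j, hj⟩ : ∃ j, n = i + j := ⟨n - i, by omega⟩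
  subst hj
  rw [show i - 0 = i from by omega, show 2*(i+j) - i - (i+j) = j from by omega,
    show 2*(i+j) - i = i + 2*j from by omega]
  ring
private def pnat (n : ℕ) (pos : Fin (2*n) → Bool) : ℕ → Bool :=
  fun a => if h : a < 2*n then pos ⟨a, h⟩ else false

private lemma pnat_eq (n : ℕ) (pos : Fin (2*n) → Bool) (a : Fin (2*n)) :
    pos a = pnat n pos ↑a := by
  simp [pnat, a.isLt]

/-- Upper bound `i * (2n - i)` on the number of concordant (positive-above-negative)
pairs when exactly `i` of the `n` positives lie in the top `n` of `2n` items,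
with equality attained by the extremal arrangement
(`i` positives, `n - i` negatives | `n - i` positives, `i` negatives). -/
theorem stmt_2 (n i : ℕ) (hn : 1 ≤ n) (hi : i ≤ n)
    (pos : Fin (2 * n) → Bool)
    (hpos : (Finset.univ.filter fun a : Fin (2 * n) => pos a = true).card = n)
    (htop : (Finset.univ.filter fun a : Fin (2 * n) => pos a = true ∧ (a : ℕ) < n).card = i) :
    ((Finset.univ.filter fun q : Fin (2 * n) × Fin (2 * n) =>
        pos q.1 = true ∧ pos q.2 = false ∧ q.1 < q.2).card ≤ i * (2 * n - i)) ∧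
    ((Finset.univ.filter fun q : Fin (2 * n) × Fin (2 * n) =>
        ((q.1 : ℕ) < i ∨ (n ≤ (q.1 : ℕ) ∧ (q.1 : ℕ) < 2 * n - i)) ∧
        ¬((q.2 : ℕ) < i ∨ (n ≤ (q.2 : ℕ) ∧ (q.2 : ℕ) < 2 * n - i)) ∧
        q.1 < q.2).card = i * (2 * n - i)) := by
  constructor
  · have h1 : ∀ a : Fin (2*n), pos a = true ↔ pnat n pos ↑a = true := by
      intro a; rw [pnat_eq n pos a]
    have h2 : ∀ a : Fin (2*n), pos a = false ↔ pnat n pos ↑a = false := by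
      intro a; rw [pnat_eq n pos a]
    have key := fin_pairs_card (2*n) (fun a => pos a = true) (fun a => pos a = false)
      (fun a => pnat n pos a = true) (fun a => pnat n pos a = false) h1 h2
    have hS : ((Finset.range (2*n)).filter fun a => pnat n pos a = true).card = n :=
      (fin_filter_card (2*n) (fun a => pos a = true) (fun a => pnat n pos a = true) h1).symm.trans
        hpos
    have hA : ((Finset.range (2*n)).filter fun a => pnat n pos a = true ∧ a < n).card = i :=
      (fin_filter_card (2*n) (fun a : Fin (2*n) => pos a = true ∧ (a : ℕ) < n)
        (fun a => pnat n pos a = true ∧ a < n)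
        (fun a => by
          show pos a = true ∧ (a : ℕ) < n ↔ pnat n pos ↑a = true ∧ (a : ℕ) < n
          rw [pnat_eq n pos a])).symm.trans htop
    exact le_of_eq_of_le key (part1_nat n i hn hi (pnat n pos) hS hA)
  · have key := fin_pairs_card (2*n)
      (fun a : Fin (2*n) => (a : ℕ) < i ∨ (n ≤ (a : ℕ) ∧ (a : ℕ) < 2*n - i))
      (fun a : Fin (2*n) => ¬((a : ℕ) < i ∨ (n ≤ (a : ℕ) ∧ (a : ℕ) < 2*n - i)))
      (fun a : ℕ => a < i ∨ (n ≤ a ∧ a < 2*n - i))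
      (fun a : ℕ => ¬(a < i ∨ (n ≤ a ∧ a < 2*n - i)))
      (fun a => Iff.rfl) (fun a => Iff.rfl)
    exact key.trans (part2_nat n i hn hi)
end

section
/- Let a finite set of 2n items consist of n positives and n negatives, all with distinct scores, arranged in some linear order by score. Suppose exactly i of the positives occupy positions among the top n. Then the number of concordant (positive above negative) pairs is at least i², with equality attained by the arrangement where the first n positions are n−i negatives followed by i positives and the last n positions are i negatives followed by n−i positives. -/
lemma card_interval_aux (m l u : ℕ) (h : u ≤ m) :
    (Finset.univ.filter fun a : Fin m => l ≤ (a : ℕ) ∧ (a : ℕ) < u).card = u - l := by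
  rw [← Nat.card_Ico l u]
  refine Finset.card_bij (fun a _ => (a : ℕ)) ?_ ?_ ?_
  · intro a ha; simp only [Finset.mem_filter] at ha; simp [Finset.mem_Ico]; omega
  · intro a _ b _ hab; exact Fin.val_injective hab
  · intro b hb; simp only [Finset.mem_Ico] at hb
    exact ⟨⟨b, by omega⟩, by simp; omega, rfl⟩

/-- Lower bound `i ^ 2` on the number of concordant (positive-above-negative)
pairs when exactly `i` of the `n` positives lie in the top `n` of `2n` items,
with equality attained by the extremal arrangement
(`n - i` negatives, `i` positives | `i` negatives, `n - i` positives). -/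
theorem stmt_3 (n i : ℕ) (hn : 1 ≤ n) (hi : i ≤ n)
    (pos : Fin (2 * n) → Bool)
    (hpos : (Finset.univ.filter fun a : Fin (2 * n) => pos a = true).card = n)
    (htop : (Finset.univ.filter fun a : Fin (2 * n) => pos a = true ∧ (a : ℕ) < n).card = i) :
    (i ^ 2 ≤ (Finset.univ.filter fun q : Fin (2 * n) × Fin (2 * n) =>
        pos q.1 = true ∧ pos q.2 = false ∧ q.1 < q.2).card) ∧
    ((Finset.univ.filter fun q : Fin (2 * n) × Fin (2 * n) =>
        ((n - i ≤ (q.1 : ℕ) ∧ (q.1 : ℕ) < n) ∨ n + i ≤ (q.1 : ℕ)) ∧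
        ¬((n - i ≤ (q.2 : ℕ) ∧ (q.2 : ℕ) < n) ∨ n + i ≤ (q.2 : ℕ)) ∧
        q.1 < q.2).card = i ^ 2) := by
  constructor
  · -- lower bound
    set A := Finset.univ.filter fun a : Fin (2 * n) => pos a = true ∧ (a : ℕ) < n with hA
    set B := Finset.univ.filter fun a : Fin (2 * n) => pos a = false ∧ n ≤ (a : ℕ) with hB
    have hsplit1 : A.card
        + (Finset.univ.filter fun a : Fin (2 * n) => pos a = true ∧ ¬((a : ℕ) < n)).card
        = (Finset.univ.filter fun a : Fin (2 * n) => pos a = true).card := by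
      rw [hA, ← Finset.filter_filter, ← Finset.filter_filter]
      exact Finset.card_filter_add_card_filter_not _
    have hbot : (Finset.univ.filter fun a : Fin (2 * n) => n ≤ (a : ℕ)).card = n := by
      have : (Finset.univ.filter fun a : Fin (2 * n) => n ≤ (a : ℕ))
          = Finset.univ.filter fun a : Fin (2 * n) => n ≤ (a : ℕ) ∧ (a : ℕ) < 2 * n := by
        apply Finset.filter_congr
        intro a _
        have := a.isLt
        simp
      rw [this, card_interval_aux _ _ _ le_rfl]; omega
    have hsplit2 : (Finset.univ.filter fun a : Fin (2 * n) => n ≤ (a : ℕ) ∧ pos a = true).card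
        + (Finset.univ.filter fun a : Fin (2 * n) => n ≤ (a : ℕ) ∧ ¬(pos a = true)).card
        = (Finset.univ.filter fun a : Fin (2 * n) => n ≤ (a : ℕ)).card := by
      rw [← Finset.filter_filter, ← Finset.filter_filter]
      exact Finset.card_filter_add_card_filter_not _
    have heq1 : (Finset.univ.filter fun a : Fin (2 * n) => n ≤ (a : ℕ) ∧ pos a = true).card
        = (Finset.univ.filter fun a : Fin (2 * n) => pos a = true ∧ ¬((a : ℕ) < n)).card := by
      congr 1; apply Finset.filter_congr; intro a _
      simp only [not_lt, eq_iff_iff]; tauto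
    have heq2 : B = Finset.univ.filter fun a : Fin (2 * n) => n ≤ (a : ℕ) ∧ ¬(pos a = true) := by
      rw [hB]; apply Finset.filter_congr; intro a _
      simp only [Bool.not_eq_true]; tauto
    have hBcard : B.card = i := by
      rw [heq2]
      have h1 : (Finset.univ.filter fun a : Fin (2 * n) => pos a = true ∧ ¬((a : ℕ) < n)).card
          = n - i := by omega
      omega
    have hsub : A ×ˢ B ⊆ Finset.univ.filter fun q : Fin (2 * n) × Fin (2 * n) =>
        pos q.1 = true ∧ pos q.2 = false ∧ q.1 < q.2 := by
      intro q hq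
      rw [Finset.mem_product, hA, hB] at hq
      simp only [Finset.mem_filter, Finset.mem_univ, true_and] at hq ⊢
      obtain ⟨⟨h1, h2⟩, h3, h4⟩ := hq
      exact ⟨h1, h3, by rw [Fin.lt_def]; omega⟩
    calc i ^ 2 = i * i := sq i
      _ = A.card * B.card := by rw [htop, hBcard]
      _ = (A ×ˢ B).card := (Finset.card_product _ _).symm
      _ ≤ _ := Finset.card_le_card hsub
  · -- equality for extremal arrangement
    have hext : (Finset.univ.filter fun q : Fin (2 * n) × Fin (2 * n) =>
        ((n - i ≤ (q.1 : ℕ) ∧ (q.1 : ℕ) < n) ∨ n + i ≤ (q.1 : ℕ)) ∧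
        ¬((n - i ≤ (q.2 : ℕ) ∧ (q.2 : ℕ) < n) ∨ n + i ≤ (q.2 : ℕ)) ∧
        q.1 < q.2) =
        (Finset.univ.filter fun a : Fin (2 * n) => n - i ≤ (a : ℕ) ∧ (a : ℕ) < n) ×ˢ
        (Finset.univ.filter fun a : Fin (2 * n) => n ≤ (a : ℕ) ∧ (a : ℕ) < n + i) := by
      ext q
      have h1 := q.1.isLt
      have h2 := q.2.isLt
      simp only [Finset.mem_filter, Finset.mem_univ, true_and, Finset.mem_product, Fin.lt_def]
      omega
    rw [hext, Finset.card_product, card_interval_aux _ _ _ (by omega),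
      card_interval_aux _ _ _ (by omega)]
    have e1 : n - (n - i) = i := by omega
    have e2 : n + i - n = i := by omega
    rw [e1, e2, sq]
end
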